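/- arXiv:0808.0148 — 2 statements merged into one kernel-verified Lean document; each statement's English description precedes it below -/
import Mathlib

section
/- Let G=(V,E) be a connected finite undirected graph with n = |V| ≥ 2. Then the minimum of con_2(F) over all unit K_n-flows F in G equals the maximum of Λ_s(G) over all vertex weightings s: V → ℝ≥0 that are not identically zero. -/
noncomputable section

namespace Formal

/-- Index type of all simple paths in `G`, with ordered endpoints. -/
def PathIdx {V : Type} (G : SimpleGraph V) : Type := Σ u v : V, G.Path u v

instance {V : Type} [Fintype V] [DecidableEq V] (G : SimpleGraph V) [DecidableRel G.Adj] :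
    Fintype (PathIdx G) := by unfold PathIdx; infer_instance

variable {V : Type} [Fintype V] [DecidableEq V]

/-- The congestion that the flow `F` induces at the vertex `v`. -/
def congAt (G : SimpleGraph V) [DecidableRel G.Adj] (F : PathIdx G → ℝ) (v : V) : ℝ :=
  ∑ q : PathIdx G, if v ∈ (q.2.2 : G.Walk q.1 q.2.1).support then F q else 0

/-- The vertex `2`-congestion of a flow. -/
def con2 (G : SimpleGraph V) [DecidableRel G.Adj] (F : PathIdx G → ℝ) : ℝ :=
  Real.sqrt (∑ v : V, (congAt G F v) ^ 2)

/-- The total amount of flow that `F` sends between `u` and `v` (over all simple paths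
between `u` and `v`, in both orientations). -/
def flowBetween (G : SimpleGraph V) [DecidableRel G.Adj] (F : PathIdx G → ℝ) (u v : V) : ℝ :=
  (∑ p : G.Path u v, F ⟨u, v, p⟩) + (∑ p : G.Path v u, F ⟨v, u, p⟩)

/-- A unit `K_n`-flow in `G` (`n = |V|`): one unit of flow between every pair of distinct
vertices of `G`, and no flow on the remaining (trivial) paths. -/
def IsCompleteFlow (G : SimpleGraph V) [DecidableRel G.Adj] (F : PathIdx G → ℝ) : Prop :=
  (∀ q, 0 ≤ F q) ∧ (∀ u v : V, u ≠ v → flowBetween G F u v = 1) ∧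
    (∀ (u : V) (p : G.Path u u), F ⟨u, u, p⟩ = 0)

/-- The semimetric on `V` induced by nonnegative vertex weights `s`: the least total
`s`-weight of the vertices of a path joining `u` and `v`. -/
def dvert {V : Type} [DecidableEq V] (G : SimpleGraph V) (s : V → ℝ) (u v : V) : ℝ :=
  if u = v then 0 else sInf {ℓ : ℝ | ∃ p : G.Walk u v, ℓ = (p.support.map s).sum}

/-- The sum of a (symmetric, vanishing on the diagonal) function over unordered pairs. -/
def pairSum {V : Type} [Fintype V] (f : V → V → ℝ) : ℝ := (∑ u : V, ∑ v : V, f u v) / 2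

/-- The quantity `Λ_s(G) = (Σ_{u,v} d_s(u,v)) / sqrt (Σ_v s(v)²)`. -/
def Lambda {V : Type} [Fintype V] [DecidableEq V] (G : SimpleGraph V) (s : V → ℝ) : ℝ :=
  pairSum (dvert G s) / Real.sqrt (∑ v : V, (s v) ^ 2)


set_option linter.unusedSectionVars false

section Aux
variable {V : Type} [Fintype V] [DecidableEq V]

/-- length of a path w.r.t. vertex weights -/
def plen {G : SimpleGraph V} (s : V → ℝ) (q : PathIdx G) : ℝ :=
  ((q.2.2 : G.Walk q.1 q.2.1).support.map s).sum

lemma plen_eq {G : SimpleGraph V} (s : V → ℝ) (q : PathIdx G) :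
    ∑ v : V, (if v ∈ (q.2.2 : G.Walk q.1 q.2.1).support then s v else 0) = plen s q := by
  rw [Finset.sum_ite, Finset.sum_const_zero, add_zero,
    plen, ← List.sum_toFinset _ (q.2.2).2.support_nodup]
  congr 1
  ext x; simp

lemma walkSum_nonneg {G : SimpleGraph V} (s : V → ℝ) (hs : ∀ v, 0 ≤ s v) {u v : V}
    (w : G.Walk u v) : 0 ≤ (w.support.map s).sum := by
  apply List.sum_nonneg; intro x hx
  obtain ⟨y, _, rfl⟩ := List.mem_map.1 hx; exact hs y

lemma toFinset_sum_le (s : V → ℝ) (hs : ∀ v, 0 ≤ s v) (l : List V) :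
    ∑ x ∈ l.toFinset, s x ≤ (l.map s).sum := by
  induction l with
  | nil => simp
  | cons a l ih =>
    rw [List.toFinset_cons, List.map_cons, List.sum_cons]
    by_cases h : a ∈ l.toFinset
    · rw [Finset.insert_eq_self.2 h]
      exact le_add_of_nonneg_of_le (hs a) ih
    · rw [Finset.sum_insert h]
      exact add_le_add (le_refl _) ih

/-- bypass shortens weighted length -/
lemma bypass_plen_le {G : SimpleGraph V} (s : V → ℝ) (hs : ∀ v, 0 ≤ s v) {u v : V}
    (w : G.Walk u v) : (w.bypass.support.map s).sum ≤ (w.support.map s).sum := by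
  rw [← List.sum_toFinset _ (SimpleGraph.Walk.bypass_isPath w).support_nodup]
  calc (w.bypass.support.toFinset.sum fun x => s x)
      ≤ ∑ x ∈ w.support.toFinset, s x := by
        apply Finset.sum_le_sum_of_subset_of_nonneg
        · intro x hx
          simp only [List.mem_toFinset] at *
          exact w.support_bypass_subset hx
        · intro x _ _; exact hs x
    _ ≤ (w.support.map s).sum := toFinset_sum_le s hs _

lemma dvert_le_walk {G : SimpleGraph V} (s : V → ℝ) (hs : ∀ v, 0 ≤ s v) {u v : V}
    (w : G.Walk u v) : dvert G s u v ≤ (w.support.map s).sum := by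
  rw [dvert]
  split_ifs with h
  · exact walkSum_nonneg s hs w
  · exact csInf_le ⟨0, fun ℓ ⟨p, hp⟩ => hp ▸ walkSum_nonneg s hs p⟩ ⟨w, rfl⟩

lemma dvert_nonneg {G : SimpleGraph V} (s : V → ℝ) (hs : ∀ v, 0 ≤ s v) (u v : V) :
    0 ≤ dvert G s u v := by
  rw [dvert]; split_ifs with h
  · exact le_refl _
  · exact Real.sInf_nonneg (fun ℓ ⟨p, hp⟩ => hp ▸ walkSum_nonneg s hs p)

lemma dvert_symm {G : SimpleGraph V} (s : V → ℝ) (u v : V) :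
    dvert G s u v = dvert G s v u := by
  have : {ℓ : ℝ | ∃ p : G.Walk u v, ℓ = (p.support.map s).sum} =
      {ℓ : ℝ | ∃ p : G.Walk v u, ℓ = (p.support.map s).sum} := by
    ext ℓ
    constructor
    · rintro ⟨p, rfl⟩
      exact ⟨p.reverse, by rw [SimpleGraph.Walk.support_reverse, List.map_reverse, List.sum_reverse]⟩
    · rintro ⟨p, rfl⟩
      exact ⟨p.reverse, by rw [SimpleGraph.Walk.support_reverse, List.map_reverse, List.sum_reverse]⟩
  rw [dvert, dvert, this]
  by_cases h : u = v <;> simp [h, eq_comm]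

lemma sum_pathIdx (G : SimpleGraph V) [DecidableRel G.Adj] (f : PathIdx G → ℝ) :
    ∑ q : PathIdx G, f q = ∑ u : V, ∑ v : V, ∑ p : G.Path u v, f ⟨u, v, p⟩ := by
  show ∑ q : (Σ u v : V, G.Path u v), f q = _
  rw [← Finset.univ_sigma_univ]; erw [Finset.sum_sigma]
  refine Finset.sum_congr rfl fun u _ => ?_
  rw [← Finset.univ_sigma_univ, Finset.sum_sigma]

variable (G : SimpleGraph V) [DecidableRel G.Adj]

/-- swap sums: weighted congestion equals flow-weighted lengths -/
lemma sum_weight_congAt (s : V → ℝ) (F : PathIdx G → ℝ) :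
    ∑ v : V, s v * congAt G F v = ∑ q : PathIdx G, F q * plen s q := by
  calc ∑ v : V, s v * congAt G F v
      = ∑ v : V, ∑ q : PathIdx G,
          (if v ∈ (q.2.2 : G.Walk q.1 q.2.1).support then s v * F q else 0) := by
        refine Finset.sum_congr rfl fun v _ => ?_
        rw [congAt, Finset.mul_sum]
        exact Finset.sum_congr rfl fun q _ => by split_ifs <;> ring
    _ = ∑ q : PathIdx G, ∑ v : V,
          (if v ∈ (q.2.2 : G.Walk q.1 q.2.1).support then s v * F q else 0) := Finset.sum_comm
    _ = ∑ q : PathIdx G, F q * plen s q := by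
        refine Finset.sum_congr rfl fun q _ => ?_
        rw [← plen_eq s q, Finset.mul_sum]
        exact Finset.sum_congr rfl fun v _ => by split_ifs <;> ring

lemma congAt_nonneg {F : PathIdx G → ℝ} (hF : ∀ q, 0 ≤ F q) (v : V) : 0 ≤ congAt G F v := by
  apply Finset.sum_nonneg; intro q _; split_ifs; exacts [hF q, le_refl 0]

lemma con2_nonneg (F : PathIdx G → ℝ) : 0 ≤ con2 G F := Real.sqrt_nonneg _

/-- the key double-sum identity -/
lemma pair_double_sum (g : PathIdx G → ℝ) :
    ∑ u : V, ∑ v : V, ((∑ p : G.Path u v, g ⟨u, v, p⟩) + (∑ p : G.Path v u, g ⟨v, u, p⟩))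
      = 2 * ∑ q : PathIdx G, g q := by
  have h1 : ∑ u : V, ∑ v : V, ∑ p : G.Path u v, g ⟨u, v, p⟩ = ∑ q : PathIdx G, g q :=
    (sum_pathIdx G g).symm
  have h2 : ∑ u : V, ∑ v : V, ∑ p : G.Path v u, g ⟨v, u, p⟩ = ∑ q : PathIdx G, g q := by
    rw [Finset.sum_comm]; exact (sum_pathIdx G g).symm
  simp only [Finset.sum_add_distrib, h1, h2]; ring

lemma plen_nonneg {G : SimpleGraph V} (s : V → ℝ) (hs : ∀ v, 0 ≤ s v) (q : PathIdx G) :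
    0 ≤ plen s q := walkSum_nonneg s hs _

lemma dvert_le_plen (s : V → ℝ) (hs : ∀ v, 0 ≤ s v) (q : PathIdx G) :
    dvert G s q.1 q.2.1 ≤ plen s q := dvert_le_walk s hs _

lemma sumsq_pos {s : V → ℝ} (hs : ∀ v, 0 ≤ s v) (hs0 : s ≠ 0) :
    0 < ∑ v : V, (s v) ^ 2 := by
  obtain ⟨v, hv⟩ := Function.ne_iff.1 hs0
  exact Finset.sum_pos' (fun i _ => sq_nonneg _)
    ⟨v, Finset.mem_univ v, pow_pos (lt_of_le_of_ne (hs v) (Ne.symm hv)) 2⟩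

lemma pair_bound {F : PathIdx G → ℝ} (hF : IsCompleteFlow G F)
    {s : V → ℝ} (hs : ∀ v, 0 ≤ s v) (u v : V) :
    dvert G s u v ≤ (∑ p : G.Path u v, F ⟨u, v, p⟩ * plen s ⟨u, v, p⟩)
      + (∑ p : G.Path v u, F ⟨v, u, p⟩ * plen s ⟨v, u, p⟩) := by
  by_cases h : u = v
  · rw [dvert, if_pos h]
    have : ∀ (a b : V) (p : G.Path a b), 0 ≤ F ⟨a, b, p⟩ * plen s ⟨a, b, p⟩ :=
      fun a b p => mul_nonneg (hF.1 _) (plen_nonneg s hs _)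
    exact add_nonneg (Finset.sum_nonneg fun p _ => this u v p)
      (Finset.sum_nonneg fun p _ => this v u p)
  · calc dvert G s u v = dvert G s u v * flowBetween G F u v := by
          rw [hF.2.1 u v h, mul_one]
    _ = (∑ p : G.Path u v, F ⟨u, v, p⟩ * dvert G s u v)
        + (∑ p : G.Path v u, F ⟨v, u, p⟩ * dvert G s u v) := by
          rw [flowBetween, mul_add, Finset.mul_sum, Finset.mul_sum]
          simp [mul_comm]
    _ ≤ _ := by
        refine add_le_add (Finset.sum_le_sum fun p _ => ?_) (Finset.sum_le_sum fun p _ => ?_)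
        · exact mul_le_mul_of_nonneg_left (dvert_le_plen G s hs ⟨u, v, p⟩) (hF.1 _)
        · rw [dvert_symm]
          exact mul_le_mul_of_nonneg_left (dvert_le_plen G s hs ⟨v, u, p⟩) (hF.1 _)

lemma cauchy_step (s : V → ℝ) (hs : ∀ v, 0 ≤ s v) {F : PathIdx G → ℝ} (hF : ∀ q, 0 ≤ F q) :
    ∑ v : V, s v * congAt G F v ≤ Real.sqrt (∑ v : V, (s v) ^ 2) * con2 G F := by
  have hT : 0 ≤ ∑ v : V, s v * congAt G F v :=
    Finset.sum_nonneg fun v _ => mul_nonneg (hs v) (congAt_nonneg G hF v)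
  have hcs := Finset.sum_mul_sq_le_sq_mul_sq Finset.univ s (congAt G F)
  calc ∑ v : V, s v * congAt G F v
      = Real.sqrt ((∑ v : V, s v * congAt G F v) ^ 2) := (Real.sqrt_sq hT).symm
    _ ≤ Real.sqrt ((∑ v : V, (s v) ^ 2) * ∑ v : V, (congAt G F v) ^ 2) :=
        Real.sqrt_le_sqrt hcs
    _ = _ := by
        rw [Real.sqrt_mul (Finset.sum_nonneg fun v _ => sq_nonneg _), con2]


lemma weak_duality {F : PathIdx G → ℝ} (hF : IsCompleteFlow G F)
    {s : V → ℝ} (hs : ∀ v, 0 ≤ s v) (hs0 : s ≠ 0) : Lambda G s ≤ con2 G F := by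
  have hsq := sumsq_pos hs hs0
  have hsqrt : 0 < Real.sqrt (∑ v : V, (s v) ^ 2) := Real.sqrt_pos.2 hsq
  rw [Lambda, div_le_iff₀ hsqrt]
  have h1 : pairSum (dvert G s) ≤ ∑ q : PathIdx G, F q * plen s q := by
    rw [pairSum, div_le_iff₀ (by norm_num : (0:ℝ) < 2)]
    calc ∑ u : V, ∑ v : V, dvert G s u v
        ≤ ∑ u : V, ∑ v : V, ((∑ p : G.Path u v, F ⟨u, v, p⟩ * plen s ⟨u, v, p⟩)
            + (∑ p : G.Path v u, F ⟨v, u, p⟩ * plen s ⟨v, u, p⟩)) :=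
          Finset.sum_le_sum fun u _ => Finset.sum_le_sum fun v _ => pair_bound G hF hs u v
      _ = 2 * ∑ q : PathIdx G, F q * plen s q := pair_double_sum G (fun q => F q * plen s q)
      _ = (∑ q : PathIdx G, F q * plen s q) * 2 := by ring
  calc pairSum (dvert G s) ≤ ∑ q : PathIdx G, F q * plen s q := h1
    _ = ∑ v : V, s v * congAt G F v := (sum_weight_congAt G s F).symm
    _ ≤ Real.sqrt (∑ v : V, (s v) ^ 2) * con2 G F := cauchy_step G s hs hF.1
    _ = con2 G F * Real.sqrt (∑ v : V, (s v) ^ 2) := mul_comm _ _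

open Classical in
/-- canonical 1/2-1/2 flow -/
def canonFlow (hG : G.Connected) : PathIdx G → ℝ := fun r =>
  if r.1 ≠ r.2.1 ∧ r.2.2 = (hG.preconnected r.1 r.2.1).some.toPath then 2⁻¹ else 0

lemma canonFlow_isCompleteFlow (hG : G.Connected) : IsCompleteFlow G (canonFlow G hG) := by
  classical
  refine ⟨fun q => ?_, fun u v huv => ?_, fun u p => ?_⟩
  · rw [canonFlow]; split_ifs <;> norm_num
  · have key : ∀ a b : V, a ≠ b →
        (∑ p : G.Path a b, canonFlow G hG ⟨a, b, p⟩) = 2⁻¹ := by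
      intro a b hab
      have : ∀ p : G.Path a b, canonFlow G hG ⟨a, b, p⟩ =
          if p = (hG.preconnected a b).some.toPath then (2:ℝ)⁻¹ else 0 := by
        intro p
        unfold canonFlow
        simp only [ne_eq, hab, not_false_iff, true_and]
      simp only [this]
      rw [Finset.sum_ite_eq' Finset.univ]
      simp
    rw [flowBetween, key u v huv, key v u (Ne.symm huv)]
    norm_num
  · unfold canonFlow
    simp

lemma isClosed_flowSet : IsClosed {F : PathIdx G → ℝ | IsCompleteFlow G F} := by
  have : {F : PathIdx G → ℝ | IsCompleteFlow G F} =
      (⋂ q : PathIdx G, {F | 0 ≤ F q}) ∩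
      ((⋂ u : V, ⋂ v : V, {F | u ≠ v → flowBetween G F u v = 1}) ∩
       (⋂ u : V, ⋂ p : G.Path u u, {F | F ⟨u, u, p⟩ = 0})) := by
    ext F
    simp only [Set.mem_setOf_eq, Set.mem_inter_iff, Set.mem_iInter, IsCompleteFlow]
  rw [this]
  have hcont : ∀ u v : V, Continuous fun F : PathIdx G → ℝ => flowBetween G F u v := by
    intro u v
    unfold flowBetween
    exact ((continuous_finset_sum _ fun p _ => continuous_apply (⟨u, v, p⟩ : PathIdx G))).add
      ((continuous_finset_sum _ fun p _ => continuous_apply (⟨v, u, p⟩ : PathIdx G)))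
  refine IsClosed.inter (isClosed_iInter fun q => isClosed_le continuous_const (continuous_apply q))
    (IsClosed.inter (isClosed_iInter fun u => isClosed_iInter fun v => ?_)
      (isClosed_iInter fun u => isClosed_iInter fun p =>
        isClosed_eq (continuous_apply _) continuous_const))
  by_cases h : u = v
  · have : {F : PathIdx G → ℝ | u ≠ v → flowBetween G F u v = 1} = Set.univ := by
      ext F; simp [h]
    rw [this]; exact isClosed_univ
  · have : {F : PathIdx G → ℝ | u ≠ v → flowBetween G F u v = 1}
        = {F | flowBetween G F u v = 1} := by
      ext F; simp [h]
    rw [this]; exact isClosed_eq (hcont u v) continuous_const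

lemma continuous_con2 : Continuous (con2 G) := by
  apply Real.continuous_sqrt.comp
  apply continuous_finset_sum
  intro v _
  apply Continuous.pow
  apply continuous_finset_sum
  intro q _
  by_cases h : v ∈ (q.2.2 : G.Walk q.1 q.2.1).support
  · simpa [h] using continuous_apply q
  · simp only [h, if_false]; exact continuous_const

lemma flow_diag_eq_zero {F : PathIdx G → ℝ} (hF : IsCompleteFlow G F) (q : PathIdx G)
    (h : q.1 = q.2.1) : F q = 0 := by
  obtain ⟨u, v, p⟩ := q
  dsimp at h
  subst h
  exact hF.2.2 u p

lemma flow_le_one {F : PathIdx G → ℝ} (hF : IsCompleteFlow G F) (q : PathIdx G) :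
    F q ≤ 1 := by
  by_cases h : q.1 = q.2.1
  · rw [flow_diag_eq_zero G hF q h]; norm_num
  · calc F q = F ⟨q.1, q.2.1, q.2.2⟩ := rfl
      _ ≤ ∑ p : G.Path q.1 q.2.1, F ⟨q.1, q.2.1, p⟩ :=
          Finset.single_le_sum (f := fun p : G.Path q.1 q.2.1 => F ⟨q.1, q.2.1, p⟩)
            (fun p _ => hF.1 _) (Finset.mem_univ q.2.2)
      _ ≤ flowBetween G F q.1 q.2.1 :=
          le_add_of_nonneg_right (Finset.sum_nonneg fun p _ => hF.1 _)
      _ = 1 := hF.2.1 _ _ h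

lemma exists_min_flow (hG : G.Connected) :
    ∃ F, IsCompleteFlow G F ∧ ∀ F', IsCompleteFlow G F' → con2 G F ≤ con2 G F' := by
  have hne : Set.Nonempty {F : PathIdx G → ℝ | IsCompleteFlow G F} :=
    ⟨canonFlow G hG, canonFlow_isCompleteFlow G hG⟩
  have hsub : {F : PathIdx G → ℝ | IsCompleteFlow G F} ⊆
      Set.univ.pi (fun _ : PathIdx G => Set.Icc (0:ℝ) 1) := by
    intro F hF q _
    exact ⟨hF.1 q, flow_le_one G hF q⟩
  have hcpt : IsCompact {F : PathIdx G → ℝ | IsCompleteFlow G F} :=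
    IsCompact.of_isClosed_subset (isCompact_univ_pi fun _ => isCompact_Icc)
      (isClosed_flowSet G) hsub
  obtain ⟨F, hFmem, hFmin⟩ := hcpt.exists_isMinOn hne (continuous_con2 G).continuousOn
  exact ⟨F, hFmem, fun F' hF' => hFmin hF'⟩

instance {V : Type} [Fintype V] [DecidableEq V] (G : SimpleGraph V) [DecidableRel G.Adj] :
    DecidableEq (PathIdx G) := by unfold PathIdx; infer_instance

variable {V : Type} [Fintype V] [DecidableEq V] (G : SimpleGraph V) [DecidableRel G.Adj]

def unitAt (r : PathIdx G) : PathIdx G → ℝ := fun x => if x = r then 1 else 0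

lemma sum_unitAt_plen (s : V → ℝ) (r : PathIdx G) :
    ∑ x : PathIdx G, unitAt G r x * plen s x = plen s r := by
  have : ∀ x : PathIdx G, unitAt G r x * plen s x = if x = r then plen s x else 0 := by
    intro x; rw [unitAt]; split_ifs <;> ring
  simp only [this, Finset.sum_ite_eq' Finset.univ r, Finset.mem_univ, if_true]

lemma sum_unitAt_path (r : PathIdx G) (a b : V) :
    ∑ p : G.Path a b, unitAt G r ⟨a, b, p⟩ = if a = r.1 ∧ b = r.2.1 then 1 else 0 := by
  obtain ⟨x, y, pr⟩ := r
  by_cases hx : a = x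
  · subst hx
    by_cases hy : b = y
    · subst hy
      have h1 : ∀ p : G.Path a b, unitAt G ⟨a, b, pr⟩ ⟨a, b, p⟩ = if p = pr then 1 else 0 := by
        intro p
        unfold unitAt
        by_cases hp : p = pr
        · subst hp; rw [if_pos rfl]; exact if_pos rfl
        · rw [if_neg hp, if_neg]
          intro h
          have h2 := (Sigma.mk.inj_iff.1 h).2
          have h3 := eq_of_heq h2
          exact hp (eq_of_heq (Sigma.mk.inj_iff.1 h3).2)
      simp only [h1, Finset.sum_ite_eq' Finset.univ pr, Finset.mem_univ, if_true]
      simp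
    · have h1 : ∀ p : G.Path a b, unitAt G ⟨a, y, pr⟩ ⟨a, b, p⟩ = 0 := by
        intro p
        unfold unitAt; rw [if_neg]
        intro h
        exact hy (congrArg (fun z : PathIdx G => z.2.1) h)
      simp [h1, hy]
  · have h1 : ∀ p : G.Path a b, unitAt G ⟨x, y, pr⟩ ⟨a, b, p⟩ = 0 := by
      intro p
      unfold unitAt; rw [if_neg]
      intro h
      exact hx (congrArg (fun z : PathIdx G => z.1) h)
    simp [h1, hx]

lemma congAt_linear (F D : PathIdx G → ℝ) (c : ℝ) (v : V) :
    congAt G (fun r => F r + c * D r) v = congAt G F v + c * congAt G D v := by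
  rw [congAt, congAt, congAt, Finset.mul_sum, ← Finset.sum_add_distrib]
  refine Finset.sum_congr rfl fun q _ => ?_
  split_ifs <;> ring

lemma flowBetween_linear (F D : PathIdx G → ℝ) (c : ℝ) (u v : V) :
    flowBetween G (fun r => F r + c * D r) u v
      = flowBetween G F u v + c * flowBetween G D u v := by
  simp only [flowBetween, Finset.sum_add_distrib, Finset.mul_sum, mul_add]
  ring

/-- The variational argument: at a minimizer, every flow-carrying path is a
weighted-shortest walk for the congestion weights. -/
lemma opt_flow_plen_min {F : PathIdx G → ℝ} (hF : IsCompleteFlow G F)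
    (hmin : ∀ F', IsCompleteFlow G F' → con2 G F ≤ con2 G F')
    {q : PathIdx G} (hq : 0 < F q) (w : G.Walk q.1 q.2.1) :
    plen (congAt G F) q ≤ (w.support.map (congAt G F)).sum := by
  set s : V → ℝ := congAt G F with hs_def
  have hs : ∀ v, 0 ≤ s v := congAt_nonneg G hF.1
  set q' : PathIdx G := ⟨q.1, q.2.1, ⟨w.bypass, w.bypass_isPath⟩⟩ with hq'_def
  have hq'len : plen s q' = (w.bypass.support.map s).sum := rfl
  suffices h : plen s q ≤ plen s q' by
    rw [hq'len] at h
    exact h.trans (bypass_plen_le s hs w)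
  by_cases hqq : q' = q
  · rw [hqq]
  have hu : q.1 ≠ q.2.1 := by
    intro h
    have := flow_diag_eq_zero G hF q h
    linarith
  set D : PathIdx G → ℝ := fun r => unitAt G q' r - unitAt G q r with hD_def
  -- feasibility of perturbed flows
  have hfeas : ∀ ε : ℝ, 0 < ε → ε ≤ F q → IsCompleteFlow G (fun r => F r + ε * D r) := by
    intro ε hε hεq
    refine ⟨fun r => ?_, fun a b hab => ?_, fun a p => ?_⟩
    · show 0 ≤ F r + ε * D r
      have hq2 : ¬ q = q' := fun h => hqq h.symm
      by_cases hr : r = q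
      · have hrq' : r ≠ q' := by rw [hr]; exact fun h => hqq h.symm
        have hD : D r = -1 := by simp [hD_def, unitAt, hr, hrq', hq2]
        rw [hD, hr]; linarith
      · by_cases hr' : r = q'
        · have hD : D r = 1 := by simp [hD_def, unitAt, hr, hr', hqq]
          rw [hD]
          have := hF.1 r
          linarith
        · have hD : D r = 0 := by simp [hD_def, unitAt, hr, hr']
          rw [hD]
          have := hF.1 r
          linarith
    · rw [flowBetween_linear]
      have hzero : ∀ a b : V, flowBetween G D a b = 0 := by
        intro a b
        have h1 : ∀ (c d : V), ∑ p : G.Path c d, D ⟨c, d, p⟩ = 0 := by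
          intro c d
          simp only [hD_def, Finset.sum_sub_distrib]
          rw [sum_unitAt_path, sum_unitAt_path]
          exact sub_eq_zero_of_eq rfl
        rw [flowBetween, h1, h1, add_zero]
      rw [hzero, mul_zero, add_zero]
      exact hF.2.1 a b hab
    · show F ⟨a, a, p⟩ + ε * D ⟨a, a, p⟩ = 0
      have h1 : D ⟨a, a, p⟩ = 0 := by
        have hne1 : (⟨a, a, p⟩ : PathIdx G) ≠ q := by
          intro h
          exact hu ((congrArg (fun z : PathIdx G => z.1) h).symm.trans
            (congrArg (fun z : PathIdx G => z.2.1) h))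
        have hne2 : (⟨a, a, p⟩ : PathIdx G) ≠ q' := by
          intro h
          exact hu ((congrArg (fun z : PathIdx G => z.1) h).symm.trans
            (congrArg (fun z : PathIdx G => z.2.1) h))
        simp [hD_def, unitAt, hne1, hne2]
        split_ifs with h1 h2 h2
        · norm_num
        · exact absurd h1 hne2
        · exact absurd h2 hne1
        · norm_num
      rw [h1, mul_zero, add_zero]
      exact hF.2.2 a p
  -- the two scalars
  set A : ℝ := ∑ v : V, s v * congAt G D v with hA_def
  set B : ℝ := ∑ v : V, (congAt G D v) ^ 2 with hB_def
  have hA_eq : A = plen s q' - plen s q := by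
    rw [hA_def, sum_weight_congAt]
    simp only [hD_def, sub_mul, Finset.sum_sub_distrib]
    rw [sum_unitAt_plen, sum_unitAt_plen]
  have hB_nonneg : 0 ≤ B := Finset.sum_nonneg fun v _ => sq_nonneg _
  have key : ∀ ε : ℝ, 0 < ε → ε ≤ F q → 0 ≤ 2 * A + ε * B := by
    intro ε hε hεq
    have hle := hmin _ (hfeas ε hε hεq)
    rw [con2, con2] at hle
    have hle2 : ∑ v : V, (congAt G F v) ^ 2
        ≤ ∑ v : V, (congAt G (fun r => F r + ε * D r) v) ^ 2 :=
      (Real.sqrt_le_sqrt_iff (Finset.sum_nonneg fun v _ => sq_nonneg _)).1 hle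
    have hexp : ∑ v : V, (congAt G (fun r => F r + ε * D r) v) ^ 2
        = (∑ v : V, (congAt G F v) ^ 2) + (2 * ε * A + ε ^ 2 * B) := by
      simp only [congAt_linear]
      rw [hA_def, hB_def, Finset.mul_sum, Finset.mul_sum, ← Finset.sum_add_distrib,
        ← Finset.sum_add_distrib]
      exact Finset.sum_congr rfl fun v _ => by rw [hs_def]; ring
    rw [hexp] at hle2
    nlinarith
  have hA_nonneg : 0 ≤ A := by
    by_contra hA'
    push_neg at hA'
    rcases eq_or_lt_of_le hB_nonneg with hB0 | hBpos
    · have := key (F q) hq le_rfl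
      nlinarith
    · set ε : ℝ := min (F q) (-A / B) with hε_def
      have hεpos : 0 < ε := lt_min hq (div_pos (neg_pos.2 hA') hBpos)
      have hk := key ε hεpos (min_le_left _ _)
      have hεB : ε * B ≤ -A := by
        calc ε * B ≤ (-A / B) * B :=
              mul_le_mul_of_nonneg_right (min_le_right _ _) hB_nonneg
          _ = -A := div_mul_cancel₀ _ hBpos.ne'
      nlinarith
  rw [hA_eq] at hA_nonneg
  linarith

lemma dvert_eq_plen_of_pos {F : PathIdx G → ℝ} (hF : IsCompleteFlow G F)
    (hmin : ∀ F', IsCompleteFlow G F' → con2 G F ≤ con2 G F')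
    {q : PathIdx G} (hq : 0 < F q) :
    dvert G (congAt G F) q.1 q.2.1 = plen (congAt G F) q := by
  have hs : ∀ v, 0 ≤ congAt G F v := congAt_nonneg G hF.1
  have hu : q.1 ≠ q.2.1 := by
    intro h
    have := flow_diag_eq_zero G hF q h
    linarith
  refine le_antisymm (dvert_le_plen G _ hs q) ?_
  rw [dvert, if_neg hu]
  refine le_csInf ⟨_, ⟨(q.2.2 : G.Walk q.1 q.2.1), rfl⟩⟩ ?_
  rintro ℓ ⟨w, rfl⟩
  exact opt_flow_plen_min G hF hmin hq w

/-- At a minimizer the congestion weighting is nonzero. -/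
lemma exists_pos_flow {F : PathIdx G → ℝ} (hF : IsCompleteFlow G F)
    (hn : 2 ≤ Fintype.card V) : ∃ q : PathIdx G, 0 < F q := by
  obtain ⟨u, v, huv⟩ := Fintype.exists_pair_of_one_lt_card (α := V) (by omega)
  by_contra hall
  push_neg at hall
  have hzero : ∀ q : PathIdx G, F q = 0 := fun q => le_antisymm (hall q) (hF.1 q)
  have := hF.2.1 u v huv
  rw [flowBetween] at this
  have e : ∀ a b : V, ∑ p : G.Path a b, F ⟨a, b, p⟩ = 0 := fun a b => Finset.sum_eq_zero fun p _ => hzero _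
  rw [e, e, add_zero] at this
  exact one_ne_zero this.symm

lemma congAt_pos {F : PathIdx G → ℝ} (hF : IsCompleteFlow G F)
    {q : PathIdx G} (hq : 0 < F q) : 0 < congAt G F q.1 := by
  rw [congAt]
  have hmem : q.1 ∈ (q.2.2 : G.Walk q.1 q.2.1).support := SimpleGraph.Walk.start_mem_support _
  calc (0:ℝ) < F q := hq
    _ = (if q.1 ∈ (q.2.2 : G.Walk q.1 q.2.1).support then F q else 0) := by rw [if_pos hmem]
    _ ≤ _ := Finset.single_le_sum
        (f := fun r : PathIdx G => if q.1 ∈ (r.2.2 : G.Walk r.1 r.2.1).support then F r else 0)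
        (fun r _ => by split_ifs; exacts [hF.1 r, le_refl 0]) (Finset.mem_univ q)

lemma strong_duality {F : PathIdx G → ℝ} (hF : IsCompleteFlow G F)
    (hmin : ∀ F', IsCompleteFlow G F' → con2 G F ≤ con2 G F')
    (hn : 2 ≤ Fintype.card V) :
    (∀ v, 0 ≤ congAt G F v) ∧ congAt G F ≠ 0 ∧ Lambda G (congAt G F) = con2 G F := by
  set s : V → ℝ := congAt G F with hs_def
  have hs : ∀ v, 0 ≤ s v := congAt_nonneg G hF.1
  obtain ⟨q0, hq0⟩ := exists_pos_flow G hF hn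
  have hpos := congAt_pos G hF hq0
  have hs0 : s ≠ 0 := by
    intro h
    rw [hs_def] at h
    rw [congrFun h q0.1] at hpos
    exact lt_irrefl 0 hpos
  refine ⟨hs, hs0, ?_⟩
  -- per-pair identity
  have hpair : ∀ u v : V, dvert G s u v
      = (∑ p : G.Path u v, F ⟨u, v, p⟩ * plen s ⟨u, v, p⟩)
        + (∑ p : G.Path v u, F ⟨v, u, p⟩ * plen s ⟨v, u, p⟩) := by
    intro u v
    by_cases h : u = v
    · rw [dvert, if_pos h]
      subst h
      have e1 : (∑ p : G.Path u u, F ⟨u, u, p⟩ * plen s ⟨u, u, p⟩) = 0 :=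
        Finset.sum_eq_zero fun p _ => by rw [hF.2.2 u p, zero_mul]
      rw [e1, add_zero]
    · have hterm1 : ∀ p : G.Path u v, F ⟨u, v, p⟩ * plen s ⟨u, v, p⟩
          = F ⟨u, v, p⟩ * dvert G s u v := by
        intro p
        rcases eq_or_lt_of_le (hF.1 ⟨u, v, p⟩) with h0 | h0
        · rw [← h0, zero_mul, zero_mul]
        · rw [dvert_eq_plen_of_pos G hF hmin h0]
      have hterm2 : ∀ p : G.Path v u, F ⟨v, u, p⟩ * plen s ⟨v, u, p⟩
          = F ⟨v, u, p⟩ * dvert G s u v := by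
        intro p
        rcases eq_or_lt_of_le (hF.1 ⟨v, u, p⟩) with h0 | h0
        · rw [← h0, zero_mul, zero_mul]
        · rw [dvert_symm s u v, dvert_eq_plen_of_pos G hF hmin h0]
      simp only [hterm1, hterm2]
      rw [← Finset.sum_mul, ← Finset.sum_mul, ← add_mul]
      have : (∑ p : G.Path u v, F ⟨u, v, p⟩) + (∑ p : G.Path v u, F ⟨v, u, p⟩) = 1 :=
        hF.2.1 u v h
      rw [this, one_mul]
  have hsum : pairSum (dvert G s) = ∑ v : V, (s v) ^ 2 := by
    rw [pairSum]
    have h2 : ∑ u : V, ∑ v : V, dvert G s u v = 2 * ∑ q : PathIdx G, F q * plen s q := by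
      rw [Finset.sum_congr rfl fun u _ => Finset.sum_congr rfl fun v _ => hpair u v]
      exact pair_double_sum G (fun q => F q * plen s q)
    rw [h2, ← sum_weight_congAt]
    field_simp
    exact Finset.sum_congr rfl fun v _ => by rw [hs_def]; ring
  rw [Lambda, hsum, Real.div_sqrt, con2]


end Aux

/-- duality of metrics and flows. For a connected graph `G` on `n ≥ 2`
vertices, the minimum `2`-congestion of a unit `K_n`-flow equals the maximum of `Λ_s(G)`
over nonnegative vertex weightings `s` that are not identically zero. -/
theorem statement_1 {V : Type} [Fintype V] [DecidableEq V]
    (G : SimpleGraph V) [DecidableRel G.Adj] (hG : G.Connected)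
    (hn : 2 ≤ Fintype.card V) :
    ∃ m : ℝ,
      IsLeast {c : ℝ | ∃ F : PathIdx G → ℝ, IsCompleteFlow G F ∧ c = con2 G F} m ∧
      IsGreatest {c : ℝ | ∃ s : V → ℝ, (∀ v, 0 ≤ s v) ∧ s ≠ 0 ∧ c = Lambda G s} m := by
  obtain ⟨F, hF, hmin⟩ := exists_min_flow G hG
  obtain ⟨hs, hs0, hΛ⟩ := strong_duality G hF hmin hn
  refine ⟨con2 G F, ⟨⟨F, hF, rfl⟩, ?_⟩, ⟨⟨congAt G F, hs, hs0, hΛ.symm⟩, ?_⟩⟩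
  · rintro c ⟨F', hF', rfl⟩
    exact hmin F' hF'
  · rintro c ⟨s', hs', hs0', rfl⟩
    exact weak_duality G hF hs' hs0'

end Formal
end
end

section
/- There is a universal constant c > 0 such that the following holds. Let (X,d) be a finite metric space with n = |X|, and let Δ₂ = sqrt((1/n²)·Σ_{u,v∈X} d(u,v)²). Suppose there exists x₀ ∈ X with |B(x₀, Δ₂/4)| ≥ n/10, where B(x,r) is the closed ball of radius r. Set S = B(x₀, Δ₂/4) and f(u) = d(u,S) = min_{y∈S} d(u,y). Then f is non-expansive and Σ_{u,v∈X} (f(u)−f(v))² ≥ c · Σ_{u,v∈X} d(u,v)². -/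
noncomputable section

namespace Formal

private lemma le_infDist_aux {X : Type} [MetricSpace X] {s : Set X} (hs : s.Nonempty)
    {x : X} {r : ℝ} (h : ∀ y ∈ s, r ≤ dist x y) : r ≤ Metric.infDist x s := by
  by_contra hlt
  push_neg at hlt
  obtain ⟨y, hy, hdy⟩ := (Metric.infDist_lt_iff hs).mp hlt
  exact absurd (h y hy) (not_le.mpr hdy)

private lemma sq_aux {f d Δ : ℝ} (hf0 : 0 ≤ f) (hfd : d - Δ / 4 ≤ f)
    (hd : 0 ≤ d) (hΔ : 0 ≤ Δ) : d ^ 2 / 9 - Δ ^ 2 / 64 ≤ f ^ 2 := by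
  rcases le_total d (3 * Δ / 8) with h | h
  · nlinarith [sq_nonneg f, sq_nonneg (d - 3 * Δ / 8)]
  · nlinarith [sq_nonneg (f - (d - Δ / 4))]

/-- There is a universal constant `c > 0` such that: in any finite
metric space, if the closed ball of radius `Δ₂/4` around some point `x₀` contains at
least `n/10` points (where `Δ₂² = (1/n²)·Σ_{u,v} d(u,v)²`), then the map
`f(u) = d(u, S)` with `S = B(x₀, Δ₂/4)` is non-expansive and satisfies
`Σ_{u,v} (f(u) - f(v))² ≥ c·Σ_{u,v} d(u,v)²`. -/
theorem statement_15 :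
    ∃ c : ℝ, 0 < c ∧
      ∀ (X : Type) [MetricSpace X] [Fintype X] (x₀ : X) (Δ₂ : ℝ),
        Δ₂ = Real.sqrt ((∑ u : X, ∑ v : X, dist u v ^ 2) / (Fintype.card X : ℝ) ^ 2) →
        (Fintype.card X : ℝ) / 10 ≤ ((Metric.closedBall x₀ (Δ₂ / 4)).ncard : ℝ) →
        (∀ u v : X,
          |Metric.infDist u (Metric.closedBall x₀ (Δ₂ / 4)) -
              Metric.infDist v (Metric.closedBall x₀ (Δ₂ / 4))| ≤ dist u v) ∧
        c * ∑ u : X, ∑ v : X, dist u v ^ 2 ≤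
          ∑ u : X, ∑ v : X,
            (Metric.infDist u (Metric.closedBall x₀ (Δ₂ / 4)) -
              Metric.infDist v (Metric.closedBall x₀ (Δ₂ / 4))) ^ 2 := by
  refine ⟨7 / 5760, by norm_num, ?_⟩
  intro X _ _ x₀ Δ₂ hΔ hcard
  set S : Set X := Metric.closedBall x₀ (Δ₂ / 4) with hSdef
  set f : X → ℝ := fun u => Metric.infDist u S with hfdef
  -- Part 1: non-expansiveness
  have part1 : ∀ u v : X, |f u - f v| ≤ dist u v := by
    intro u v
    rw [abs_sub_le_iff]
    constructor
    · have := Metric.infDist_le_infDist_add_dist (x := u) (y := v) (s := S)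
      linarith
    · have := Metric.infDist_le_infDist_add_dist (x := v) (y := u) (s := S)
      rw [dist_comm v u] at this
      linarith
  refine ⟨part1, ?_⟩
  -- Part 2
  by_cases hE : IsEmpty X
  · simp
  rw [not_isEmpty_iff] at hE
  set n : ℕ := Fintype.card X with hn
  have hn0 : 0 < (n : ℝ) := by exact_mod_cast Fintype.card_pos
  set T : ℝ := ∑ u : X, ∑ v : X, dist u v ^ 2 with hT
  have hT0 : 0 ≤ T := Finset.sum_nonneg fun u _ =>
    Finset.sum_nonneg fun v _ => sq_nonneg _
  have hΔ0 : 0 ≤ Δ₂ := hΔ ▸ Real.sqrt_nonneg _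
  have hTeq : T = (n : ℝ) ^ 2 * Δ₂ ^ 2 := by
    have h1 : Δ₂ ^ 2 = T / (n : ℝ) ^ 2 := by
      rw [hΔ, Real.sq_sqrt (div_nonneg hT0 (by positivity))]
    rw [h1]; field_simp
  have hx₀S : x₀ ∈ S := Metric.mem_closedBall_self (by linarith)
  have hSne : S.Nonempty := ⟨x₀, hx₀S⟩
  have hf0 : ∀ u, 0 ≤ f u := fun u => Metric.infDist_nonneg
  have hflb : ∀ u, dist u x₀ - Δ₂ / 4 ≤ f u := by
    intro u
    apply le_infDist_aux hSne
    intro y hy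
    have h1 : dist y x₀ ≤ Δ₂ / 4 := Metric.mem_closedBall.mp hy
    have h2 : dist u x₀ ≤ dist u y + dist y x₀ := dist_triangle u y x₀
    linarith
  -- D := sum of dist to x₀ squared
  set D : ℝ := ∑ u : X, dist u x₀ ^ 2 with hD
  have hDlb : (n : ℝ) * Δ₂ ^ 2 / 4 ≤ D := by
    have key : T ≤ 4 * (n : ℝ) * D := by
      have hpt : ∀ u v : X, dist u v ^ 2 ≤ 2 * dist u x₀ ^ 2 + 2 * dist v x₀ ^ 2 := by
        intro u v
        have h1 : dist u v ≤ dist u x₀ + dist x₀ v := dist_triangle u x₀ v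
        have h2 : dist x₀ v = dist v x₀ := dist_comm _ _
        nlinarith [dist_nonneg (x := u) (y := v), dist_nonneg (x := u) (y := x₀),
          dist_nonneg (x := v) (y := x₀), sq_nonneg (dist u x₀ - dist v x₀)]
      calc T ≤ ∑ u : X, ∑ v : X, (2 * dist u x₀ ^ 2 + 2 * dist v x₀ ^ 2) := by
              apply Finset.sum_le_sum; intro u _
              apply Finset.sum_le_sum; intro v _
              exact hpt u v
        _ = 4 * (n : ℝ) * D := by
              have h1 : ∀ u : X, ∑ v : X, (2 * dist u x₀ ^ 2 + 2 * dist v x₀ ^ 2)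
                  = 2 * (n : ℝ) * dist u x₀ ^ 2 + 2 * D := by
                intro u
                rw [Finset.sum_add_distrib, Finset.sum_const, Finset.card_univ,
                  ← Finset.mul_sum, nsmul_eq_mul, ← hn, ← hD]
                ring
              rw [Finset.sum_congr rfl fun u _ => h1 u, Finset.sum_add_distrib,
                Finset.sum_const, Finset.card_univ, ← Finset.mul_sum, nsmul_eq_mul,
                ← hn, ← hD]
              ring
    rw [hTeq] at key
    nlinarith
  -- lower bound on sum of f squared
  have hfsq : 7 * (n : ℝ) * Δ₂ ^ 2 / 576 ≤ ∑ u : X, f u ^ 2 := by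
    have step : ∑ u : X, (dist u x₀ ^ 2 / 9 - Δ₂ ^ 2 / 64) ≤ ∑ u : X, f u ^ 2 :=
      Finset.sum_le_sum fun u _ => sq_aux (hf0 u) (hflb u) dist_nonneg hΔ0
    have : ∑ u : X, (dist u x₀ ^ 2 / 9 - Δ₂ ^ 2 / 64)
        = D / 9 - (n : ℝ) * Δ₂ ^ 2 / 64 := by
      rw [Finset.sum_sub_distrib, Finset.sum_const, Finset.card_univ, nsmul_eq_mul,
        ← Finset.sum_div, ← hD, ← hn]
      ring
    rw [this] at step
    linarith
  -- the finset version of S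
  set Sfin : Finset X := (Set.toFinite S).toFinset with hSfin
  have hScard : (S.ncard : ℝ) = (Sfin.card : ℝ) := by
    rw [Set.ncard_eq_toFinset_card S (Set.toFinite S)]
  -- lower bound double sum
  have hmain : ∀ u : X, (Sfin.card : ℝ) * f u ^ 2 ≤ ∑ v : X, (f u - f v) ^ 2 := by
    intro u
    have h1 : ∑ v ∈ Sfin, (f u - f v) ^ 2 ≤ ∑ v : X, (f u - f v) ^ 2 :=
      Finset.sum_le_sum_of_subset_of_nonneg (Finset.subset_univ _)
        (fun v _ _ => sq_nonneg _)
    have h2 : ∑ v ∈ Sfin, (f u - f v) ^ 2 = (Sfin.card : ℝ) * f u ^ 2 := by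
      rw [Finset.sum_congr rfl (fun v hv => ?_), Finset.sum_const, nsmul_eq_mul]
      have hvS : v ∈ S := (Set.Finite.mem_toFinset _).mp hv
      rw [show f v = 0 from Metric.infDist_zero_of_mem hvS, sub_zero]
    linarith
  have hfinal : (n : ℝ) / 10 * (7 * (n : ℝ) * Δ₂ ^ 2 / 576)
      ≤ ∑ u : X, ∑ v : X, (f u - f v) ^ 2 := by
    have hSc10 : (n : ℝ) / 10 ≤ (Sfin.card : ℝ) := by rw [← hScard]; exact hcard
    have hsum : (Sfin.card : ℝ) * ∑ u : X, f u ^ 2 ≤ ∑ u : X, ∑ v : X, (f u - f v) ^ 2 := by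
      rw [Finset.mul_sum]
      exact Finset.sum_le_sum fun u _ => hmain u
    have hfs0 : 0 ≤ ∑ u : X, f u ^ 2 := Finset.sum_nonneg fun u _ => sq_nonneg _
    calc (n : ℝ) / 10 * (7 * (n : ℝ) * Δ₂ ^ 2 / 576)
        ≤ (Sfin.card : ℝ) * ∑ u : X, f u ^ 2 := by
          apply mul_le_mul hSc10 hfsq (by positivity) (Nat.cast_nonneg _)
      _ ≤ _ := hsum
  calc (7 : ℝ) / 5760 * T = (n : ℝ) / 10 * (7 * (n : ℝ) * Δ₂ ^ 2 / 576) := by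
        rw [hTeq]; ring
    _ ≤ _ := hfinal
end Formal
end
end
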